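/- Let f : ℝ → ℝ be a C¹ function that is L-periodic (L > 0). Then the oscillation of f over one period satisfies sup f − inf f ≤ (1/2) · L^{1/2} · (∫₀ᴸ f'(x)² dx)^{1/2}. -/

import Mathlib

/-- Cauchy–Schwarz for interval integrals of continuous functions. -/
lemma cs_aux (g : ℝ → ℝ) (hg : Continuous g) {s t : ℝ} (hst : s ≤ t) :
    (∫ x in s..t, g x) ^ 2 ≤ (t - s) * ∫ x in s..t, (g x) ^ 2 := by
  rcases eq_or_lt_of_le hst with h | h
  · simp [h]
  have hT : (0:ℝ) < t - s := by linarith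
  set A := ∫ x in s..t, g x with hA
  have key : (0:ℝ) ≤ ∫ x in s..t, ((t - s) * g x - A) ^ 2 :=
    intervalIntegral.integral_nonneg hst (fun x _ => sq_nonneg _)
  have expand : ∫ x in s..t, ((t - s) * g x - A) ^ 2
      = (t - s) ^ 2 * (∫ x in s..t, (g x) ^ 2) - 2 * (t - s) * A * A + A ^ 2 * (t - s) := by
    have h1 : ∀ x, ((t - s) * g x - A) ^ 2
        = ((t - s) ^ 2 * (g x) ^ 2 - (2 * (t - s) * A) * g x) + A ^ 2 := by
      intro x; ring
    simp_rw [h1]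
    rw [intervalIntegral.integral_add, intervalIntegral.integral_sub,
      intervalIntegral.integral_const_mul, intervalIntegral.integral_const_mul,
      intervalIntegral.integral_const]
    · simp [hA, smul_eq_mul]; ring
    · exact (continuous_const.mul (hg.pow 2)).intervalIntegrable _ _
    · exact (continuous_const.mul hg).intervalIntegrable _ _
    · exact ((continuous_const.mul (hg.pow 2)).sub
        (continuous_const.mul hg)).intervalIntegrable _ _
    · exact intervalIntegrable_const
  rw [expand] at key
  nlinarith [key, hT]

lemma key_aux (f : ℝ → ℝ) (L : ℝ) (hL : 0 < L)
    (hf : ContDiff ℝ 1 f)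
    (hper : ∀ x, f (x + L) = f x)
    (a b : ℝ) (hba : b ≤ a) (hab : a ≤ b + L) :
    f a - f b ≤ (1/2) * Real.sqrt L * Real.sqrt (∫ x in (0:ℝ)..L, (deriv f x)^2) := by
  set g := deriv f with hg_def
  have hg : Continuous g := (hf.continuous_deriv le_rfl)
  have hdiff : Differentiable ℝ f := hf.differentiable one_ne_zero
  have hgper : Function.Periodic (fun x => g x ^ 2) L := by
    intro x
    have h1 : deriv (fun y => f (y + L)) x = deriv f (x + L) := by
      simpa using deriv_comp_add_const f L x
    have h2 : deriv (fun y => f (y + L)) x = deriv f x := by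
      congr 1; funext y; exact hper y
    simp only [hg_def]
    rw [← h1, h2]
  have ftc : ∀ u v : ℝ, ∫ x in u..v, g x = f v - f u := by
    intro u v
    exact intervalIntegral.integral_deriv_eq_sub (fun x _ => hdiff x)
      (hg.intervalIntegrable _ _)
  set I := ∫ x in (0:ℝ)..L, g x ^ 2 with hI_def
  set I1 := ∫ x in b..a, g x ^ 2 with hI1_def
  set I2 := ∫ x in a..(b + L), g x ^ 2 with hI2_def
  have hI1_nonneg : 0 ≤ I1 := intervalIntegral.integral_nonneg hba (fun x _ => sq_nonneg _)
  have hI2_nonneg : 0 ≤ I2 := intervalIntegral.integral_nonneg hab (fun x _ => sq_nonneg _)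
  have hsum : I1 + I2 = I := by
    have h1 : I1 + I2 = ∫ x in b..(b + L), g x ^ 2 :=
      intervalIntegral.integral_add_adjacent_intervals
        ((hg.pow 2).intervalIntegrable _ _) ((hg.pow 2).intervalIntegrable _ _)
    have h2 : (∫ x in b..(b + L), g x ^ 2) = ∫ x in (0:ℝ)..(0 + L), g x ^ 2 :=
      hgper.intervalIntegral_add_eq b 0
    rw [h1, h2]; norm_num [hI_def]
  have hI_nonneg : 0 ≤ I := by linarith
  set D := f a - f b with hD_def
  have hD1 : D ^ 2 ≤ (a - b) * I1 := by
    have h : D = ∫ x in b..a, g x := by rw [ftc b a]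
    rw [h]; exact cs_aux g hg hba
  have hD2 : D ^ 2 ≤ (b + L - a) * I2 := by
    have h1 : -D = ∫ x in a..(b + L), g x := by rw [ftc a (b + L), hper b]; ring
    have h2 : D ^ 2 = (-D) ^ 2 := by ring
    rw [h2, h1]; exact cs_aux g hg hab
  have hkey : D ^ 2 ≤ L * I / 4 := by
    have hint1 := mul_le_mul_of_nonneg_right hD1 (show (0:ℝ) ≤ b + L - a by linarith)
    have hint2 := mul_le_mul_of_nonneg_right hD2 (show (0:ℝ) ≤ a - b by linarith)
    have e3' : D ^ 2 * L ≤ (a - b) * (b + L - a) * I1 + (a - b) * (b + L - a) * I2 := by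
      nlinarith [hint1, hint2]
    have e3 : D ^ 2 * L ≤ (a - b) * (b + L - a) * I := by
      rw [← hsum]; linarith [e3']
    have e4 : (a - b) * (b + L - a) ≤ L ^ 2 / 4 := by
      nlinarith [sq_nonneg ((a - b) - (b + L - a))]
    have e5 : (a - b) * (b + L - a) * I ≤ (L ^ 2 / 4) * I :=
      mul_le_mul_of_nonneg_right e4 hI_nonneg
    nlinarith [le_trans e3 e5, hL]
  have hRHS : (0:ℝ) ≤ (1/2) * Real.sqrt L * Real.sqrt I := by positivity
  rcases le_or_gt D 0 with hD0 | hD0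
  · linarith
  · have hsq : ((1/2) * Real.sqrt L * Real.sqrt I) ^ 2 = L * I / 4 := by
      rw [mul_pow, mul_pow, Real.sq_sqrt hL.le, Real.sq_sqrt hI_nonneg]; ring
    nlinarith [hkey, hsq, hD0, hRHS]

theorem stmt_6 (f : ℝ → ℝ) (L : ℝ) (hL : 0 < L)
    (hf : ContDiff ℝ 1 f)
    (hper : ∀ x, f (x + L) = f x) :
    sSup (f '' Set.Icc 0 L) - sInf (f '' Set.Icc 0 L)
      ≤ (1/2) * Real.sqrt L * Real.sqrt (∫ x in (0:ℝ)..L, (deriv f x)^2) := by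
  have hne : (Set.Icc (0:ℝ) L).Nonempty := ⟨0, by constructor <;> linarith⟩
  have hcont : ContinuousOn f (Set.Icc 0 L) := hf.continuous.continuousOn
  obtain ⟨a, haI, hmax⟩ := isCompact_Icc.exists_sSup_image_eq hne hcont
  obtain ⟨b, hbI, hmin⟩ := isCompact_Icc.exists_sInf_image_eq hne hcont
  rw [hmax, hmin]
  rcases le_or_gt b a with hba | hab
  · exact key_aux f L hL hf hper a b hba (by linarith [haI.2, hbI.1])
  · have h := key_aux f L hL hf hper (a + L) b
      (by linarith [hbI.2, haI.1]) (by linarith)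
    rwa [hper a] at h
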